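/- Let E be a complete Hausdorff locally convex topological vector space over ℝ, let a ≤ b be real numbers, and let γ : ℝ → E be continuous on the interval [a,b]. Then there exists a unique element x ∈ E such that l(x) = ∫ₐᵇ l(γ(t)) dt for every continuous linear functional l : E → ℝ; moreover, this x satisfies p(x) ≤ ∫ₐᵇ p(γ(t)) dt for every continuous seminorm p on E. -/

import Mathlib

open MeasureTheory

section Aux

variable {E : Type*} [AddCommGroup E] [Module ℝ E] [UniformSpace E] [IsUniformAddGroup E]
    [ContinuousSMul ℝ E] [LocallyConvexSpace ℝ E] [T2Space E] [CompleteSpace E]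

/-- Hahn–Banach: a continuous linear functional touching a continuous seminorm at a point. -/
lemma aux_exists_dominated_functional (p : Seminorm ℝ E) (hp : Continuous (p : E → ℝ))
    (x : E) : ∃ l : E →L[ℝ] ℝ, l x = p x ∧ ∀ y, l y ≤ p y := by
  rcases eq_or_ne x 0 with rfl | hx
  · exact ⟨0, by simp, fun y => by simpa using apply_nonneg p y⟩
  · set f : E →ₗ.[ℝ] ℝ := LinearPMap.mkSpanSingleton x (p x) hx with hf
    have hfle : ∀ z : f.domain, f z ≤ p z := by
      rintro ⟨z, hz⟩
      rcases Submodule.mem_span_singleton.1 hz with ⟨c, rfl⟩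
      have : f ⟨c • x, hz⟩ = c • (p x) := LinearPMap.mkSpanSingleton'_apply _ _ _ c hz
      rw [this]
      have : p (c • x) = |c| * p x := by
        rw [map_smul_eq_mul]; simp [Real.norm_eq_abs]
      rw [this]
      calc c • (p x) = c * p x := rfl
        _ ≤ |c| * p x := by
            exact mul_le_mul_of_nonneg_right (le_abs_self c) (apply_nonneg p x)
    obtain ⟨g, hg1, hg2⟩ := exists_extension_of_le_sublinear f p
      (fun c hc y => by rw [map_smul_eq_mul]; simp [Real.norm_eq_abs, abs_of_pos hc])
      (fun y z => map_add_le_add p y z) hfle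
    have habs : ∀ y, |g y| ≤ p y := by
      intro y
      rcases abs_cases (g y) with ⟨h1, _⟩ | ⟨h1, _⟩
      · rw [h1]; exact hg2 y
      · rw [h1]
        have := hg2 (-y)
        rw [map_neg] at this
        simpa [map_neg_eq_map p] using this
    have hcont : Continuous g := by
      have h0 : ContinuousAt g 0 := by
        rw [ContinuousAt, map_zero]
        have hp0 : Filter.Tendsto (p : E → ℝ) (nhds 0) (nhds 0) := by
          have := hp.continuousAt (x := (0 : E))
          rwa [ContinuousAt, map_zero] at this
        exact squeeze_zero_norm (fun y => by simpa [Real.norm_eq_abs] using habs y) hp0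
      exact uniformContinuous_of_continuousAt_zero g.toAddMonoidHom h0 |>.continuous
    refine ⟨⟨g, hcont⟩, ?_, hg2⟩
    show g x = p x
    have h1 := hg1 ⟨x, Submodule.mem_span_singleton_self x⟩
    exact h1.trans (LinearPMap.mkSpanSingleton_apply ℝ ℝ hx (p x))

/-- Existence of the weak integral. -/
lemma aux_exists_weak_integral (a b : ℝ) (hab : a ≤ b) (γ : ℝ → E)
    (hγ : ContinuousOn γ (Set.Icc a b)) :
    ∃ x : E, ∀ l : E →L[ℝ] ℝ, l x = ∫ t in a..b, l (γ t) := by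
  rcases eq_or_lt_of_le hab with rfl | hlt
  · exact ⟨0, fun l => by simp⟩
  set K : Set E := closure (convexHull ℝ (γ '' Set.Icc a b)) with hK
  have hKcomp : IsCompact K :=
    TotallyBounded.isCompact_of_isClosed
      ((totallyBounded_convexHull.2
        ((isCompact_Icc.image_of_continuousOn hγ).totallyBounded)).closure)
      isClosed_closure
  have hKconv : Convex ℝ K := (convex_convexHull ℝ _).closure
  set K' : Set E := (fun y => (b - a) • y) '' K with hK'
  have hK'comp : IsCompact K' := hKcomp.image (continuous_const_smul _)
  -- the candidate sets
  set Z : Finset (E →L[ℝ] ℝ) → Set E :=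
    fun S => K' ∩ {y | ∀ l ∈ S, l y = ∫ t in a..b, l (γ t)} with hZ
  have hZclosed : ∀ S, IsClosed (Z S) := by
    intro S
    refine hK'comp.isClosed.inter ?_
    have : {y : E | ∀ l ∈ S, l y = ∫ t in a..b, l (γ t)} =
        ⋂ l ∈ S, {y | l y = ∫ t in a..b, l (γ t)} := by
      ext y; simp [Set.mem_iInter]
    rw [this]
    exact isClosed_biInter fun l _ => isClosed_eq l.continuous continuous_const
  have hZcomp : ∀ S, IsCompact (Z S) := fun S => hK'comp.inter_right
    (by
      have : {y : E | ∀ l ∈ S, l y = ∫ t in a..b, l (γ t)} =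
          ⋂ l ∈ S, {y | l y = ∫ t in a..b, l (γ t)} := by
        ext y; simp [Set.mem_iInter]
      rw [this]
      exact isClosed_biInter fun l _ => isClosed_eq l.continuous continuous_const)
  have hZne : ∀ S, (Z S).Nonempty := by
    intro S
    -- finite dimensional projection
    set Φ : E →L[ℝ] (S → ℝ) := ContinuousLinearMap.pi (fun l : S => (l : E →L[ℝ] ℝ)) with hΦ
    set F : ℝ → (S → ℝ) := fun t => Φ (γ t) with hF
    have hFcont : ContinuousOn F (Set.Icc a b) := Φ.continuous.comp_continuousOn hγ
    have hFint : IntegrableOn F (Set.Ioc a b) :=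
      (hFcont.integrableOn_Icc).mono_set Set.Ioc_subset_Icc_self
    set s : Set (S → ℝ) := Φ '' K with hs
    have hsconv : Convex ℝ s := hKconv.linear_image Φ.toLinearMap
    have hsclosed : IsClosed s := (hKcomp.image Φ.continuous).isClosed
    have hmem : ∀ᵐ t ∂(volume.restrict (Set.Ioc a b)), F t ∈ s := by
      refine (ae_restrict_iff' measurableSet_Ioc).2 (Filter.Eventually.of_forall ?_)
      intro t ht
      refine ⟨γ t, ?_, rfl⟩
      exact subset_closure (subset_convexHull ℝ _ ⟨t, Set.Ioc_subset_Icc_self ht, rfl⟩)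
    have hμ0 : volume (Set.Ioc a b) ≠ 0 := by
      simp [Real.volume_Ioc, hlt]
    have hμtop : volume (Set.Ioc a b) ≠ ⊤ := by simp [Real.volume_Ioc]
    have havg : ⨍ t in Set.Ioc a b, F t ∈ s :=
      hsconv.set_average_mem hsclosed hμ0 hμtop hmem hFint
    rw [setAverage_eq] at havg
    have hvol : volume.real (Set.Ioc a b) = b - a := by
      rw [measureReal_def, Real.volume_Ioc, ENNReal.toReal_ofReal (by linarith)]
    obtain ⟨y₀, hy₀K, hy₀⟩ := havg
    refine ⟨(b - a) • y₀, ⟨y₀, hy₀K, rfl⟩, ?_⟩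
    intro l hl
    have hΦy : Φ ((b - a) • y₀) = ∫ t in Set.Ioc a b, F t := by
      rw [Φ.map_smul, hy₀, hvol, smul_smul, mul_inv_cancel₀ (by linarith : b - a ≠ 0), one_smul]
    have hcomp : l ((b - a) • y₀) = (Φ ((b - a) • y₀)) ⟨l, hl⟩ := rfl
    rw [hcomp, hΦy]
    have : (∫ t in Set.Ioc a b, F t) ⟨l, hl⟩ = ∫ t in Set.Ioc a b, l (γ t) := by
      have := (ContinuousLinearMap.proj (R := ℝ) (φ := fun _ : S => ℝ)
        (⟨l, hl⟩ : S)).integral_comp_comm hFint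
      simpa [F, Φ] using this.symm
    rw [this, intervalIntegral.integral_of_le hab]
  -- FIP
  have hdir : Directed (· ⊇ ·) Z := by
    classical
    intro S T
    refine ⟨S ∪ T, ?_, ?_⟩
    · exact Set.inter_subset_inter_right _ fun y hy l hl => hy l (Finset.mem_union_left _ hl)
    · exact Set.inter_subset_inter_right _ fun y hy l hl => hy l (Finset.mem_union_right _ hl)
  obtain ⟨x, hx⟩ := IsCompact.nonempty_iInter_of_directed_nonempty_isCompact_isClosed
    Z hdir hZne hZcomp hZclosed
  refine ⟨x, fun l => ?_⟩
  have := Set.mem_iInter.1 hx {l}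
  exact this.2 l (Finset.mem_singleton_self l)

end Aux

/-- Riemann integral of a continuous curve in a complete Hausdorff locally convex space:
there is a unique element `x` with `l x = ∫ₐᵇ l (γ t) dt` for every continuous linear
functional `l`, and it satisfies `p x ≤ ∫ₐᵇ p (γ t) dt` for every continuous seminorm `p`. -/
theorem riemann_integral_in_complete_lcs
    {E : Type*} [AddCommGroup E] [Module ℝ E] [UniformSpace E] [IsUniformAddGroup E]
    [ContinuousSMul ℝ E] [LocallyConvexSpace ℝ E] [T2Space E] [CompleteSpace E]
    (a b : ℝ) (hab : a ≤ b) (γ : ℝ → E) (hγ : ContinuousOn γ (Set.Icc a b)) :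
    ∃ x : E,
      (∀ l : E →L[ℝ] ℝ, l x = ∫ t in a..b, l (γ t)) ∧
      (∀ y : E, (∀ l : E →L[ℝ] ℝ, l y = ∫ t in a..b, l (γ t)) → y = x) ∧
      (∀ p : Seminorm ℝ E, Continuous (p : E → ℝ) → p x ≤ ∫ t in a..b, p (γ t)) := by
  obtain ⟨x, hx⟩ := aux_exists_weak_integral a b hab γ hγ
  refine ⟨x, hx, ?_, ?_⟩
  · intro y hy
    by_contra hne
    obtain ⟨l, hl⟩ := SeparatingDual.exists_separating_of_ne (R := ℝ) hne
    exact hl (by rw [hy l, hx l])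
  · intro p hp
    obtain ⟨l, hlx, hly⟩ := aux_exists_dominated_functional p hp x
    rw [← hlx, hx l]
    refine intervalIntegral.integral_mono_on hab ?_ ?_ fun t _ => hly (γ t)
    · exact (l.continuous.comp_continuousOn hγ).intervalIntegrable_of_Icc hab
    · exact (hp.comp_continuousOn hγ).intervalIntegrable_of_Icc hab
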